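/- Let T, X, Y be binary with parameters a ∈ (0,1), b = c ∈ (0,1), d = e ∈ (0,1). Then for every g with −min{bd, (1−b)(1−d)} ≤ g ≤ min{b(1−d), (1−b)d}, the distribution Q_g given by Q_g(t,x,y) = P(t)·(P(x|t)P(y|t) + s(x,y)·g), where s(0,0) = s(1,1) = 1 and s(0,1) = s(1,0) = −1, belongs to Δ_P and satisfies I_{Q_g}(T:X|Y) = 0; hence the minimizer of I_Q(T:X|Y) on Δ_P is not unique. -/

import Mathlib

open scoped BigOperators
noncomputable section

variable {T X Y : Type*}

/-- A joint probability distribution of `(T,X,Y)`, as a function `T → X → Y → ℝ`. -/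
def IsDist [Fintype T] [Fintype X] [Fintype Y] (P : T → X → Y → ℝ) : Prop :=
  (∀ t x y, 0 ≤ P t x y) ∧ ∑ t, ∑ x, ∑ y, P t x y = 1

/-- The `(T,X)`-marginal. -/
def margTX [Fintype Y] (P : T → X → Y → ℝ) (t : T) (x : X) : ℝ := ∑ y, P t x y

/-- The `(T,Y)`-marginal. -/
def margTY [Fintype X] (P : T → X → Y → ℝ) (t : T) (y : Y) : ℝ := ∑ x, P t x y

/-- The `(X,Y)`-marginal. -/
def margXY [Fintype T] (P : T → X → Y → ℝ) (x : X) (y : Y) : ℝ := ∑ t, P t x y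

/-- The `T`-marginal. -/
def margT [Fintype X] [Fintype Y] (P : T → X → Y → ℝ) (t : T) : ℝ := ∑ x, ∑ y, P t x y

/-- The `Y`-marginal. -/
def margY [Fintype T] [Fintype X] (P : T → X → Y → ℝ) (y : Y) : ℝ := ∑ t, ∑ x, P t x y

/-- `Δ_P`: the polytope of joint distributions with the same `(T,X)`- and
`(T,Y)`-marginals as `P`. -/
def deltaP [Fintype T] [Fintype X] [Fintype Y] (P : T → X → Y → ℝ) :
    Set (T → X → Y → ℝ) :=
  {Q | IsDist Q ∧ (∀ t x, margTX Q t x = margTX P t x) ∧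
    (∀ t y, margTY Q t y = margTY P t y)}

/-- The conditional entropy `H_Q(T|X,Y)` (with the convention `0 log 0 = 0`,
automatic since `Real.log 0 = 0`). -/
def condEntTXY [Fintype T] [Fintype X] [Fintype Y] (Q : T → X → Y → ℝ) : ℝ :=
  ∑ t, ∑ x, ∑ y, -(Q t x y * Real.log (Q t x y / margXY Q x y))

/-- The conditional mutual information `I_Q(T:X|Y)`. -/
def CMI [Fintype T] [Fintype X] [Fintype Y] (Q : T → X → Y → ℝ) : ℝ :=
  ∑ t, ∑ x, ∑ y,
    Q t x y * Real.log (Q t x y * margY Q y / (margTY Q t y * margXY Q x y))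

lemma CMI_nonneg [Fintype T] [Fintype X] [Fintype Y] (Q : T → X → Y → ℝ)
    (hQ : IsDist Q) : 0 ≤ CMI Q := by
  obtain ⟨hQn, hQs⟩ := hQ
  have hmTY : ∀ t y, 0 ≤ margTY Q t y := fun t y =>
    Finset.sum_nonneg fun x _ => hQn t x y
  have hmXY : ∀ x y, 0 ≤ margXY Q x y := fun x y =>
    Finset.sum_nonneg fun t _ => hQn t x y
  have hmY : ∀ y, 0 ≤ margY Q y := fun y =>
    Finset.sum_nonneg fun t _ => Finset.sum_nonneg fun x _ => hQn t x y
  have key : ∀ t x y, Q t x y - margTY Q t y * margXY Q x y / margY Q y ≤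
      Q t x y * Real.log (Q t x y * margY Q y / (margTY Q t y * margXY Q x y)) := by
    intro t x y
    rcases eq_or_lt_of_le (hQn t x y) with h0 | hpos
    · rw [← h0, zero_mul, zero_sub, neg_nonpos]
      exact div_nonneg (mul_nonneg (hmTY t y) (hmXY x y)) (hmY y)
    · have hTY : 0 < margTY Q t y :=
        lt_of_lt_of_le hpos (Finset.single_le_sum (fun x _ => hQn t x y) (Finset.mem_univ x))
      have hXY : 0 < margXY Q x y :=
        lt_of_lt_of_le hpos (Finset.single_le_sum (fun t _ => hQn t x y) (Finset.mem_univ t))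
      have hY : 0 < margY Q y := by
        refine lt_of_lt_of_le hTY (Finset.single_le_sum (fun t _ => hmTY t y) (Finset.mem_univ t))
      set r := Q t x y * margY Q y / (margTY Q t y * margXY Q x y) with hr
      have hrpos : 0 < r := div_pos (mul_pos hpos hY) (mul_pos hTY hXY)
      have hlog : 1 - 1 / r ≤ Real.log r := by
        have h := Real.log_le_sub_one_of_pos (show (0:ℝ) < 1 / r by positivity)
        rw [one_div, Real.log_inv] at h
        rw [one_div]
        linarith
      have hmul : Q t x y * (1 - 1 / r) ≤ Q t x y * Real.log r :=
        mul_le_mul_of_nonneg_left hlog hpos.le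
      have hQr : Q t x y * (1 / r) = margTY Q t y * margXY Q x y / margY Q y := by
        rw [hr]
        field_simp
      have hexp : Q t x y * (1 - 1 / r) = Q t x y - Q t x y * (1 / r) := by ring
      rw [hexp, hQr] at hmul
      exact hmul
  have h1 : ∀ y, ∑ t, margTY Q t y = margY Q y := by
    intro y; simp [margTY, margY]
  have h2 : ∀ y, ∑ x, margXY Q x y = margY Q y := by
    intro y; rw [margY]; exact Finset.sum_comm
  have hsumY : ∑ y, margY Q y = 1 := by
    calc ∑ y, margY Q y = ∑ y, ∑ t, ∑ x, Q t x y := rfl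
      _ = ∑ t, ∑ y, ∑ x, Q t x y := Finset.sum_comm
      _ = ∑ t, ∑ x, ∑ y, Q t x y := Finset.sum_congr rfl fun t _ => Finset.sum_comm
      _ = 1 := hQs
  have hsumq : ∑ t, ∑ x, ∑ y, margTY Q t y * margXY Q x y / margY Q y ≤ 1 := by
    have hre : ∑ t, ∑ x, ∑ y, margTY Q t y * margXY Q x y / margY Q y
        = ∑ y, ∑ t, ∑ x, margTY Q t y * margXY Q x y / margY Q y := by
      calc ∑ t, ∑ x, ∑ y, margTY Q t y * margXY Q x y / margY Q y
          = ∑ t, ∑ y, ∑ x, margTY Q t y * margXY Q x y / margY Q y :=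
            Finset.sum_congr rfl fun t _ => Finset.sum_comm
        _ = ∑ y, ∑ t, ∑ x, margTY Q t y * margXY Q x y / margY Q y := Finset.sum_comm
    rw [hre]
    calc ∑ y, ∑ t, ∑ x, margTY Q t y * margXY Q x y / margY Q y
        = ∑ y, margY Q y * margY Q y / margY Q y := by
          refine Finset.sum_congr rfl fun y _ => ?_
          have hstep : ∑ t, ∑ x, margTY Q t y * margXY Q x y / margY Q y
              = (∑ t, margTY Q t y) * (∑ x, margXY Q x y) / margY Q y := by
            rw [Finset.sum_mul_sum]
            simp [Finset.sum_div]
          rw [hstep, h1, h2]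
      _ ≤ ∑ y, margY Q y := by
          refine Finset.sum_le_sum fun y _ => ?_
          rcases eq_or_lt_of_le (hmY y) with h0 | hpos
          · rw [← h0]; simp
          · rw [mul_div_assoc, div_self hpos.ne', mul_one]
      _ = 1 := hsumY
  have hlb : ∑ t, ∑ x, ∑ y, (Q t x y - margTY Q t y * margXY Q x y / margY Q y) ≤ CMI Q := by
    refine Finset.sum_le_sum fun t _ => Finset.sum_le_sum fun x _ =>
      Finset.sum_le_sum fun y _ => key t x y
  have hsplit : ∑ t, ∑ x, ∑ y, (Q t x y - margTY Q t y * margXY Q x y / margY Q y)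
      = 1 - ∑ t, ∑ x, ∑ y, margTY Q t y * margXY Q x y / margY Q y := by
    simp [Finset.sum_sub_distrib, hQs]
  rw [hsplit] at hlb
  linarith

/-- All-binary case with `b = c` and `d = e` (so `T ⊥ X` and `T ⊥ Y`), with
`P(t,x,y) = P(t) P(x) P(y)`: for every `g` with
`−min{bd,(1−b)(1−d)} ≤ g ≤ min{b(1−d),(1−b)d}`, the distribution
`Q_g(t,x,y) = P(t)(P(x)P(y) + s(x,y) g)` (with sign pattern `s(0,0)=s(1,1)=1`,
`s(0,1)=s(1,0)=−1`) belongs to `Δ_P` and satisfies `I_{Q_g}(T:X|Y) = 0`; hence the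
minimizer of `I_Q(T:X|Y)` on `Δ_P` is not unique. -/
theorem all_binary_diagonal_nonunique
    (a b d : ℝ) (ha : a ∈ Set.Ioo (0:ℝ) 1) (hb : b ∈ Set.Ioo (0:ℝ) 1)
    (hd : d ∈ Set.Ioo (0:ℝ) 1)
    (P : Fin 2 → Fin 2 → Fin 2 → ℝ)
    (hPdef : P = fun (t x y : Fin 2) => (if t = 0 then a else 1 - a) *
      ((if x = 0 then b else 1 - b) * (if y = 0 then d else 1 - d))) :
    (∀ g : ℝ, -min (b * d) ((1 - b) * (1 - d)) ≤ g →
      g ≤ min (b * (1 - d)) ((1 - b) * d) →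
      (fun (t x y : Fin 2) => (if t = 0 then a else 1 - a) *
          ((if x = 0 then b else 1 - b) * (if y = 0 then d else 1 - d) +
            ((if x = 0 then (1:ℝ) else -1) * (if y = 0 then (1:ℝ) else -1)) * g))
        ∈ deltaP P ∧
      CMI (fun (t x y : Fin 2) => (if t = 0 then a else 1 - a) *
          ((if x = 0 then b else 1 - b) * (if y = 0 then d else 1 - d) +
            ((if x = 0 then (1:ℝ) else -1) * (if y = 0 then (1:ℝ) else -1)) * g))
        = 0) ∧
    ∃ Q1 Q2 : Fin 2 → Fin 2 → Fin 2 → ℝ, Q1 ∈ deltaP P ∧ Q2 ∈ deltaP P ∧ Q1 ≠ Q2 ∧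
      (∀ Q ∈ deltaP P, CMI Q1 ≤ CMI Q) ∧ (∀ Q ∈ deltaP P, CMI Q2 ≤ CMI Q) := by
  obtain ⟨ha0, ha1⟩ := ha
  obtain ⟨hb0, hb1⟩ := hb
  obtain ⟨hd0, hd1⟩ := hd
  have hkey : ∀ g : ℝ, -min (b * d) ((1 - b) * (1 - d)) ≤ g →
      g ≤ min (b * (1 - d)) ((1 - b) * d) →
      (fun (t x y : Fin 2) => (if t = 0 then a else 1 - a) *
          ((if x = 0 then b else 1 - b) * (if y = 0 then d else 1 - d) +
            ((if x = 0 then (1:ℝ) else -1) * (if y = 0 then (1:ℝ) else -1)) * g))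
        ∈ deltaP P ∧
      CMI (fun (t x y : Fin 2) => (if t = 0 then a else 1 - a) *
          ((if x = 0 then b else 1 - b) * (if y = 0 then d else 1 - d) +
            ((if x = 0 then (1:ℝ) else -1) * (if y = 0 then (1:ℝ) else -1)) * g))
        = 0 := by
    intro g hgl hgu
    have hg1 : -(b * d) ≤ g := le_trans (by
      have := min_le_left (b * d) ((1 - b) * (1 - d)); linarith) hgl
    have hg2 : -((1 - b) * (1 - d)) ≤ g := le_trans (by
      have := min_le_right (b * d) ((1 - b) * (1 - d)); linarith) hgl
    have hg3 : g ≤ b * (1 - d) := le_trans hgu (min_le_left _ _)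
    have hg4 : g ≤ (1 - b) * d := le_trans hgu (min_le_right _ _)
    set Qg : Fin 2 → Fin 2 → Fin 2 → ℝ := fun (t x y : Fin 2) =>
      (if t = 0 then a else 1 - a) *
        ((if x = 0 then b else 1 - b) * (if y = 0 then d else 1 - d) +
          ((if x = 0 then (1:ℝ) else -1) * (if y = 0 then (1:ℝ) else -1)) * g) with hQg
    have hRnn : ∀ x y : Fin 2, 0 ≤ (if x = 0 then b else 1 - b) * (if y = 0 then d else 1 - d) +
        ((if x = 0 then (1:ℝ) else -1) * (if y = 0 then (1:ℝ) else -1)) * g := by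
      intro x y
      fin_cases x <;> fin_cases y <;> simp <;> linarith
    have hQnn : ∀ t x y : Fin 2, 0 ≤ Qg t x y := by
      intro t x y
      refine mul_nonneg ?_ (hRnn x y)
      split <;> linarith
    have hnot0 : ∀ i : Fin 2, i ≠ 0 → i = 1 := by decide
    have hDist : IsDist Qg := by
      refine ⟨hQnn, ?_⟩
      simp only [hQg, Fin.sum_univ_two]
      norm_num
      ring
    have hmXYg : ∀ x y : Fin 2, margXY Qg x y =
        (if x = 0 then b else 1 - b) * (if y = 0 then d else 1 - d) +
          ((if x = 0 then (1:ℝ) else -1) * (if y = 0 then (1:ℝ) else -1)) * g := by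
      intro x y
      simp only [margXY, hQg, Fin.sum_univ_two]
      norm_num
      ring
    have hmYg : ∀ y : Fin 2, margY Qg y = (if y = 0 then d else 1 - d) := by
      intro y
      fin_cases y <;>
      · simp only [margY, hQg, Fin.sum_univ_two]
        norm_num
        ring
    have hmTYg : ∀ t y : Fin 2, margTY Qg t y =
        (if t = 0 then a else 1 - a) * (if y = 0 then d else 1 - d) := by
      intro t y
      fin_cases t <;> fin_cases y <;>
      · simp only [margTY, hQg, Fin.sum_univ_two]
        norm_num
        ring
    refine ⟨⟨hDist, ?_, ?_⟩, ?_⟩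
    · intro t x
      simp only [margTX, hQg, hPdef, Fin.sum_univ_two]
      fin_cases t <;> fin_cases x <;> · norm_num; ring
    · intro t y
      simp only [margTY, hQg, hPdef, Fin.sum_univ_two]
      fin_cases t <;> fin_cases y <;> · norm_num; ring
    · have hterm : ∀ t x y : Fin 2, Qg t x y *
          Real.log (Qg t x y * margY Qg y / (margTY Qg t y * margXY Qg x y)) = 0 := by
        intro t x y
        have hPt : (0:ℝ) < (if t = 0 then a else 1 - a) := by split <;> linarith
        have hPy : (0:ℝ) < (if y = 0 then d else 1 - d) := by split <;> linarith
        have hQv : Qg t x y = (if t = 0 then a else 1 - a) *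
            ((if x = 0 then b else 1 - b) * (if y = 0 then d else 1 - d) +
              ((if x = 0 then (1:ℝ) else -1) * (if y = 0 then (1:ℝ) else -1)) * g) := rfl
        rcases eq_or_lt_of_le (hRnn x y) with h0 | hpos
        · have hz : Qg t x y = 0 := by rw [hQv, ← h0, mul_zero]
          rw [hz, zero_mul]
        · have harg : Qg t x y * margY Qg y / (margTY Qg t y * margXY Qg x y) = 1 := by
            have hgen : ∀ p q r : ℝ, p ≠ 0 → q ≠ 0 → r ≠ 0 → p * r * q / (p * q * r) = 1 := by
              intro p q r hp hq hr
              field_simp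
            rw [hQv, hmYg, hmTYg, hmXYg]
            exact hgen _ _ _ hPt.ne' hPy.ne' hpos.ne'
          rw [harg, Real.log_one, mul_zero]
      rw [CMI]
      exact Finset.sum_eq_zero fun t _ => Finset.sum_eq_zero fun x _ =>
        Finset.sum_eq_zero fun y _ => hterm t x y
  refine ⟨hkey, ?_⟩
  set g2 := min (b * (1 - d)) ((1 - b) * d) with hg2def
  have hg2pos : 0 < g2 := lt_min (by nlinarith) (by nlinarith)
  have hminnn : 0 ≤ min (b * d) ((1 - b) * (1 - d)) := le_min (by nlinarith) (by nlinarith)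
  obtain ⟨hQ1mem, hQ1cmi⟩ := hkey 0 (by linarith) hg2pos.le
  obtain ⟨hQ2mem, hQ2cmi⟩ := hkey g2 (by linarith) le_rfl
  refine ⟨_, _, hQ1mem, hQ2mem, ?_, ?_, ?_⟩
  · intro h
    have h000 := congrFun (congrFun (congrFun h 0) 0) 0
    simp at h000
    rcases h000 with h | h
    · linarith
    · linarith
  · intro Q hQ
    rw [hQ1cmi]
    exact CMI_nonneg Q hQ.1
  · intro Q hQ
    rw [hQ2cmi]
    exact CMI_nonneg Q hQ.1
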